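/- Let $A$ be a commutative ring, $M$ a finitely generated $A$-module, and $N$ an $A$-module with no nonzero Artinian submodules. If $0 \to M' \to M \to N \to 0$ is a short exact sequence of $A$-modules, then the maximal Artinian submodules of $M'$ (viewed inside $M$ via the injection) and of $M$ coincide: $S_0 M' = S_0 M$. -/
import Mathlib


/-- The maximal Artinian submodule `S₀ M`: the sum of all Artinian submodules. -/
def maxArtinian (A : Type) [CommRing A] (M : Type) [AddCommGroup M] [Module A M] :
    Submodule A M :=
  sSup {N : Submodule A M | IsArtinian A N}

/-- Given a short exact sequence `0 → M' → M → N → 0` of modules over a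
commutative ring with `M` finitely generated and `N` having no nonzero Artinian
submodules, the maximal Artinian submodules of `M'` (viewed inside `M`) and of `M`
coincide. -/
theorem maxArtinian_eq_of_ses (A M' M N : Type) [CommRing A]
    [AddCommGroup M'] [AddCommGroup M] [AddCommGroup N]
    [Module A M'] [Module A M] [Module A N] [Module.Finite A M]
    (hN : ∀ Q : Submodule A N, IsArtinian A Q → Q = ⊥)
    (f : M' →ₗ[A] M) (g : M →ₗ[A] N)
    (hf : Function.Injective f) (hg : Function.Surjective g)
    (hex : LinearMap.range f = LinearMap.ker g) :
    Submodule.map f (maxArtinian A M') = maxArtinian A M := by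
  apply le_antisymm
  · rw [maxArtinian, Submodule.map_le_iff_le_comap]
    apply sSup_le
    intro P hP
    haveI : IsArtinian A P := hP
    rw [← Submodule.map_le_iff_le_comap]
    exact le_sSup (isArtinian_of_surjective P (f.submoduleMap P) (f.submoduleMap_surjective P))
  · apply sSup_le
    intro P hP
    haveI : IsArtinian A P := hP
    have hPker : P ≤ LinearMap.ker g := by
      have hart : IsArtinian A (P.map g) :=
        isArtinian_of_surjective P (g.submoduleMap P) (g.submoduleMap_surjective P)
      have hzero := hN (P.map g) hart
      intro x hx
      have hx' : g x ∈ P.map g := Submodule.mem_map_of_mem hx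
      rw [hzero] at hx'
      simpa using hx'
    have hPr : P ≤ LinearMap.range f := hex ▸ hPker
    have hcom : IsArtinian A (P.comap f) :=
      isArtinian_of_injective (f.restrict (fun x hx => hx : ∀ x ∈ P.comap f, f x ∈ P))
        (fun a b hab => Subtype.ext (hf (Subtype.ext_iff.mp hab)))
    have : (P.comap f).map f = P := by
      rw [Submodule.map_comap_eq, inf_eq_right.mpr hPr]
    rw [← this]
    exact Submodule.map_mono (le_sSup hcom)
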